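/- Let k ≥ 1, m ≥ 0, P a 2^{-m}-separated set of cardinality 2^{2m+1} in [0,1)², and Z a set satisfying: (i) #Z ≥ c·m·2^{2m}; (ii) each z ∈ Z has a unique p(z) ∈ P with dist_H(p(z),z)² < 2^{-2m-1}; (iii) dist_H(p(z),z)² ≍ 2^{-2m-k} for all z ∈ Z. Let μ and ν be the uniform probability measures on P and Z respectively. Then ⟨M_S(μ), ν⟩ ≥ c'·2^k for an absolute constant c' > 0. -/

import Mathlib

open MeasureTheory
open scoped ENNReal

/-- A dyadic interval `[k·2^n, (k+1)·2^n)`. -/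
def IsDyadicInterval (I : Set ℝ) : Prop :=
  ∃ k n : ℤ, I = Set.Ico ((k : ℝ) * 2 ^ n) (((k : ℝ) + 1) * 2 ^ n)

/-- An axis-parallel dyadic rectangle in the plane. -/
def IsDyadicRect (R : Set (ℝ × ℝ)) : Prop :=
  ∃ I J : Set ℝ, IsDyadicInterval I ∧ IsDyadicInterval J ∧ R = I ×ˢ J

/-- `dist_H(p,q)² = inf { |R| : R dyadic rectangle containing p and q }`. -/
noncomputable def distH2 (p q : ℝ × ℝ) : ℝ≥0∞ :=
  sInf {v | ∃ R : Set (ℝ × ℝ), IsDyadicRect R ∧ p ∈ R ∧ q ∈ R ∧ v = volume R}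

/-- The dyadic strong maximal function of a measure. -/
noncomputable def MS (μ : Measure (ℝ × ℝ)) (p : ℝ × ℝ) : ℝ≥0∞ :=
  ⨆ R ∈ {R : Set (ℝ × ℝ) | IsDyadicRect R ∧ p ∈ R}, μ R / volume R

def unitSq : Set (ℝ × ℝ) := Set.Ico (0 : ℝ) 1 ×ˢ Set.Ico (0 : ℝ) 1

/-- Lower bound `⟨M_S(μ), ν⟩ ≥ c'·2^k` for the uniform measures `μ`, `ν` on the
sets `P` and `Z` of the construction.  Here `c, c₁, c₂` are the implicit constants in
the hypotheses (i) `#Z ≥ c·m·2^{2m}`, and (iii) `dist_H(p(z),z)² ≍ 2^{-2m-k}`,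
and `c' > 0` depends only on them. -/
theorem stmt10 (c c₁ c₂ : ℝ) (hc : 0 < c) (hc₁ : 0 < c₁) (hc₂ : 0 < c₂) :
    ∃ c' > (0 : ℝ), ∀ (k m : ℕ), 1 ≤ k → 1 ≤ m →
      ∀ P Z : Finset (ℝ × ℝ),
        (↑P : Set (ℝ × ℝ)) ⊆ unitSq → (↑Z : Set (ℝ × ℝ)) ⊆ unitSq →
        P.card = 2 ^ (2 * m + 1) →
        (∀ p ∈ P, ∀ q ∈ P, p ≠ q → (2 : ℝ≥0∞) ^ (-(2 * (m : ℤ))) ≤ distH2 p q) →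
        (c * m * 2 ^ (2 * m) ≤ (Z.card : ℝ)) →
        ∀ pz : ℝ × ℝ → ℝ × ℝ,
        (∀ z ∈ Z, pz z ∈ P ∧
            distH2 (pz z) z < (2 : ℝ≥0∞) ^ (-(2 * (m : ℤ)) - 1) ∧
            (∀ p ∈ P, distH2 p z < (2 : ℝ≥0∞) ^ (-(2 * (m : ℤ)) - 1) → p = pz z) ∧
            ENNReal.ofReal c₁ * (2 : ℝ≥0∞) ^ (-(2 * (m : ℤ)) - (k : ℤ)) ≤ distH2 (pz z) z ∧
            distH2 (pz z) z ≤ ENNReal.ofReal c₂ * (2 : ℝ≥0∞) ^ (-(2 * (m : ℤ)) - (k : ℤ))) →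
        ENNReal.ofReal c' * 2 ^ k ≤
          ∫⁻ z, MS (((P.card : ℝ≥0∞))⁻¹ • ∑ p ∈ P, Measure.dirac p) z
            ∂(((Z.card : ℝ≥0∞))⁻¹ • ∑ q ∈ Z, Measure.dirac q) := by
  refine ⟨1 / (4 * c₂), by positivity, ?_⟩
  intro k m hk hm P Z hPs hZs hPcard hsep hZcard pz hpz
  set μ : Measure (ℝ × ℝ) := ((P.card : ℝ≥0∞))⁻¹ • ∑ p ∈ P, Measure.dirac p with hμ
  have h2 : (2 : ℝ≥0∞) ≠ 0 := by norm_num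
  have h2' : (2 : ℝ≥0∞) ≠ ∞ := by norm_num
  -- the bound B on distH2
  set B : ℝ≥0∞ := ENNReal.ofReal c₂ * (2 : ℝ≥0∞) ^ (-(2 * (m : ℤ)) - (k : ℤ)) with hB
  have hBpos : 0 < B :=
    ENNReal.mul_pos (ENNReal.ofReal_pos.mpr hc₂).ne' (ENNReal.zpow_pos h2 h2' _).ne'
  have hBlt : B < ∞ := ENNReal.mul_lt_top ENNReal.ofReal_lt_top (ENNReal.zpow_lt_top h2 h2' _)
  have hBne : B ≠ 0 := hBpos.ne'
  have hBne' : B ≠ ∞ := hBlt.ne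
  -- pointwise lower bound
  have key : ∀ z ∈ Z, ENNReal.ofReal (1 / (4 * c₂)) * 2 ^ k ≤ MS μ z := by
    intro z hz
    obtain ⟨hpzP, -, -, -, hupp⟩ := hpz z hz
    have hlt2B : distH2 (pz z) z < 2 * B := lt_of_le_of_lt hupp (by
      nth_rewrite 1 [← one_mul B]
      rw [mul_comm 1 B, mul_comm 2 B]
      exact ENNReal.mul_lt_mul_right hBne hBne' (by norm_num))
    obtain ⟨v, ⟨R, hR, hpR, hzR, rfl⟩, hv⟩ := sInf_lt_iff.mp hlt2B
    -- μ R ≥ (P.card)⁻¹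
    have hμR : ((P.card : ℝ≥0∞))⁻¹ ≤ μ R := by
      have h1 : (1 : ℝ≥0∞) ≤ ∑ p ∈ P, Measure.dirac p R := by
        calc (1 : ℝ≥0∞) = Measure.dirac (pz z) R := by
              rw [Measure.dirac_apply, Set.indicator_of_mem hpR]; rfl
          _ ≤ ∑ p ∈ P, Measure.dirac p R :=
              Finset.single_le_sum (f := fun p => Measure.dirac p R)
                (fun i _ => bot_le) hpzP
      have : ((P.card : ℝ≥0∞))⁻¹ * 1 ≤ ((P.card : ℝ≥0∞))⁻¹ * ∑ p ∈ P, Measure.dirac p R :=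
        mul_le_mul_right h1 _
      simpa [hμ, Measure.smul_apply, Measure.finset_sum_apply, smul_eq_mul] using this
    have hMS : μ R / volume R ≤ MS μ z :=
      le_biSup (f := fun R => μ R / volume R) ⟨hR, hzR⟩
    refine le_trans ?_ hMS
    have hdiv : ((P.card : ℝ≥0∞))⁻¹ / (2 * B) ≤ μ R / volume R :=
      ENNReal.div_le_div hμR hv.le
    refine le_trans ?_ hdiv
    rw [ENNReal.le_div_iff_mul_le (Or.inl (by simp [hBne])) (Or.inl (ENNReal.mul_ne_top h2' hBne'))]
    -- arithmetic identity
    have hc₂' : ENNReal.ofReal (1 / (4 * c₂)) * ENNReal.ofReal c₂ = ENNReal.ofReal (1/4) := by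
      rw [← ENNReal.ofReal_mul (by positivity)]
      congr 1
      field_simp
    have hPc : (P.card : ℝ≥0∞) = 2 ^ ((2 * m + 1 : ℕ) : ℤ) := by
      rw [hPcard, zpow_natCast]; push_cast; ring
    rw [hPc, hB, ← ENNReal.zpow_neg]
    apply le_of_eq
    calc ENNReal.ofReal (1 / (4 * c₂)) * 2 ^ k *
          (2 * (ENNReal.ofReal c₂ * (2:ℝ≥0∞) ^ (-(2 * (m : ℤ)) - (k : ℤ))))
        = (ENNReal.ofReal (1 / (4 * c₂)) * ENNReal.ofReal c₂) *
          ((2:ℝ≥0∞) ^ ((k : ℤ)) * (2:ℝ≥0∞) ^ ((1 : ℤ)) * (2:ℝ≥0∞) ^ (-(2 * (m : ℤ)) - (k : ℤ))) := by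
          rw [zpow_one, ← zpow_natCast (2:ℝ≥0∞) k]; ring
      _ = ENNReal.ofReal (1/4) * (2:ℝ≥0∞) ^ ((k : ℤ) + 1 + (-(2 * (m : ℤ)) - (k : ℤ))) := by
          rw [hc₂', ENNReal.zpow_add h2 h2', ENNReal.zpow_add h2 h2']
      _ = (2:ℝ≥0∞) ^ (-(2:ℤ)) * (2:ℝ≥0∞) ^ ((k : ℤ) + 1 + (-(2 * (m : ℤ)) - (k : ℤ))) := by
          congr 1
          rw [ENNReal.zpow_neg]
          rw [show ((2:ℝ≥0∞) ^ (2:ℤ)) = 4 by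
            rw [show (2:ℤ) = ((2:ℕ):ℤ) by norm_num, zpow_natCast]; norm_num]
          rw [show (4:ℝ≥0∞) = ENNReal.ofReal 4 by norm_num]
          rw [← ENNReal.ofReal_inv_of_pos (by norm_num)]
          norm_num
      _ = (2:ℝ≥0∞) ^ (-((2 * m + 1 : ℕ) : ℤ)) := by
          rw [← ENNReal.zpow_add h2 h2']
          congr 1
          push_cast
          ring
  -- Z is nonempty
  have hZ0 : (Z.card : ℝ≥0∞) ≠ 0 := by
    have : (0:ℝ) < c * m * 2 ^ (2 * m) := by
      have : (1:ℝ) ≤ (m:ℝ) := by exact_mod_cast hm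
      positivity
    have hpos : (0:ℝ) < (Z.card : ℝ) := lt_of_lt_of_le this hZcard
    exact_mod_cast hpos.ne'
  have hZt : (Z.card : ℝ≥0∞) ≠ ∞ := ENNReal.natCast_ne_top _
  rw [lintegral_smul_measure, lintegral_finset_sum_measure]
  simp_rw [lintegral_dirac]
  calc ENNReal.ofReal (1 / (4 * c₂)) * 2 ^ k
      = ((Z.card : ℝ≥0∞))⁻¹ * ∑ _q ∈ Z, ENNReal.ofReal (1 / (4 * c₂)) * 2 ^ k := by
        rw [Finset.sum_const, nsmul_eq_mul, ← mul_assoc,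
          ENNReal.inv_mul_cancel hZ0 hZt, one_mul]
    _ ≤ ((Z.card : ℝ≥0∞))⁻¹ * ∑ q ∈ Z, MS μ q :=
        mul_le_mul_right (Finset.sum_le_sum key) _
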